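/- Let $u(t)$ solve $u' = 2e^{u/m}(u - m)$ with $u(0) = R_0^2 > m$. Then for all $t$ in the maximal interval of existence, $t \leq T_2 := \frac{m}{2(R_0^2 - m)} e^{-R_0^2/m}$, and $u(t) \to +\infty$ as $t \to T_2$. -/

import Mathlib

open Real Set Filter Topology

/-- If `u` has positive derivative at `c`, then `u s > u c` eventually to the right of `c`. -/
lemma deriv_pos_eventually_gt {u : ℝ → ℝ} {d c : ℝ} (h : HasDerivAt u d c) (hd : 0 < d) :
    ∀ᶠ s in 𝓝[>] c, u c < u s := by
  have hslope : Tendsto (slope u c) (𝓝[>] c) (𝓝 d) :=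
    (hasDerivAt_iff_tendsto_slope.mp h).mono_left
      (nhdsWithin_mono _ fun x hx => ne_of_gt hx)
  have hev : ∀ᶠ s in 𝓝[>] c, 0 < slope u c s :=
    hslope.eventually (eventually_gt_nhds hd)
  filter_upwards [hev, self_mem_nhdsWithin] with s hs (hsc : c < s)
  have : 0 < (u s - u c) / (s - c) := by simpa [slope_def_field, div_eq_iff] using hs
  have := mul_pos this (sub_pos.mpr hsc)
  rw [div_mul_cancel₀ _ (sub_ne_zero.mpr (ne_of_gt hsc))] at this
  linarith

theorem sphere_expands_to_infinity (m R0sq δ : ℝ) (hm : 0 < m) (hR0 : m < R0sq)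
    (hδ : 0 < δ) (u : ℝ → ℝ) (hu0 : u 0 = R0sq)
    (hode : ∀ t ∈ Ico (0 : ℝ) δ, HasDerivAt u (2 * exp (u t / m) * (u t - m)) t) :
    δ ≤ m / (2 * (R0sq - m)) * exp (-R0sq / m) ∧
      (δ = m / (2 * (R0sq - m)) * exp (-R0sq / m) →
        Tendsto u (𝓝[<] δ) atTop) := by
  set C : ℝ := 2 / m * (R0sq - m) with hC
  have hCpos : 0 < C := by
    have h1 : 0 < R0sq - m := by linarith
    positivity
  -- Step 1: u stays ≥ R0sq
  have hlow : ∀ t ∈ Ico (0 : ℝ) δ, R0sq ≤ u t := by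
    by_contra hcon
    push_neg at hcon
    obtain ⟨t0, ht0, hut0⟩ := hcon
    have ht0pos : 0 < t0 := by
      rcases lt_or_eq_of_le ht0.1 with h | h
      · exact h
      · rw [← h, hu0] at hut0; linarith
    have hcontOn : ContinuousOn u (Icc 0 t0) := fun s hs =>
      ((hode s ⟨hs.1, lt_of_le_of_lt hs.2 ht0.2⟩).continuousAt).continuousWithinAt
    set K : Set ℝ := {s ∈ Icc (0:ℝ) t0 | R0sq ≤ u s} with hK
    have hKne : K.Nonempty := ⟨0, ⟨le_refl 0, le_of_lt ht0pos⟩, by rw [hu0]⟩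
    have hKclosed : IsClosed K := by
      have hKeq : K = Icc 0 t0 ∩ u ⁻¹' Ici R0sq := by ext s; simp [hK, and_comm]
      rw [hKeq]
      exact hcontOn.preimage_isClosed_of_isClosed isClosed_Icc isClosed_Ici
    have hKcomp : IsCompact K := isCompact_Icc.of_isClosed_subset hKclosed (fun s hs => hs.1)
    obtain ⟨c, hcK, hcmax⟩ := hKcomp.exists_isGreatest hKne
    have hcIcc : c ∈ Icc (0:ℝ) t0 := hcK.1
    have hcu : R0sq ≤ u c := hcK.2
    have hcne : c ≠ t0 := fun h => by rw [h] at hcu; linarith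
    have hclt : c < t0 := lt_of_le_of_ne hcIcc.2 hcne
    have hcIco : c ∈ Ico (0:ℝ) δ := ⟨hcIcc.1, lt_trans hclt ht0.2⟩
    have hdpos : 0 < 2 * exp (u c / m) * (u c - m) := by
      have : 0 < u c - m := by linarith
      positivity
    have hev := deriv_pos_eventually_gt (hode c hcIco) hdpos
    have hIoo : Ioo c t0 ∈ 𝓝[>] c := Ioo_mem_nhdsGT hclt
    obtain ⟨s, hs1, hs2⟩ := (hev.and (eventually_of_mem hIoo fun x hx => hx)).exists
    have : s ∈ K := ⟨⟨le_of_lt (lt_of_le_of_lt hcIcc.1 hs2.1), le_of_lt hs2.2⟩,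
      le_of_lt (lt_of_le_of_lt hcu hs1)⟩
    exact absurd (hcmax this) (not_le.mpr hs2.1)
  -- Step 2: exp(-u t/m) + C t ≤ exp(-R0sq/m)
  have hkey : ∀ t ∈ Ico (0 : ℝ) δ, exp (-u t / m) + C * t ≤ exp (-R0sq / m) := by
    intro t ht
    rcases eq_or_lt_of_le ht.1 with h | htpos
    · rw [← h, hu0]; simp
    set ψ : ℝ → ℝ := fun s => exp (-u s / m) + C * s with hψ
    have hder : ∀ s ∈ Icc (0:ℝ) t, HasDerivAt ψ (C - 2 / m * (u s - m)) s := by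
      intro s hs
      have hsIco : s ∈ Ico (0:ℝ) δ := ⟨hs.1, lt_of_le_of_lt hs.2 ht.2⟩
      have h1 : HasDerivAt (fun x => -u x / m)
          (-(2 * exp (u s / m) * (u s - m)) / m) s := ((hode s hsIco).neg).div_const m
      have h2 : HasDerivAt (fun x => exp (-u x / m))
          (exp (-u s / m) * (-(2 * exp (u s / m) * (u s - m)) / m)) s := h1.exp
      have h3 : exp (-u s / m) * (-(2 * exp (u s / m) * (u s - m)) / m)
          = -(2 / m * (u s - m)) := by
        rw [show -u s / m = -(u s / m) by ring, Real.exp_neg]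
        field_simp
      rw [h3] at h2
      have := h2.add ((hasDerivAt_id s).const_mul C)
      exact this.congr_deriv (by ring)
    have hanti : AntitoneOn ψ (Icc 0 t) := by
      apply antitoneOn_of_deriv_nonpos (convex_Icc 0 t)
      · exact fun s hs => (hder s hs).continuousAt.continuousWithinAt
      · intro s hs
        rw [interior_Icc] at hs
        exact (hder s (Ioo_subset_Icc_self hs)).differentiableAt.differentiableWithinAt
      · intro s hs
        rw [interior_Icc] at hs
        rw [(hder s (Ioo_subset_Icc_self hs)).deriv]
        have : R0sq ≤ u s := hlow s ⟨le_of_lt hs.1, lt_trans hs.2 ht.2⟩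
        have h2m : 0 < 2 / m := by positivity
        have : C ≤ 2 / m * (u s - m) := by
          rw [hC]; apply mul_le_mul_of_nonneg_left (by linarith) (le_of_lt h2m)
        linarith
    have := hanti (left_mem_Icc.mpr (le_of_lt htpos)) (right_mem_Icc.mpr (le_of_lt htpos))
      (le_of_lt htpos)
    simpa [ψ, hu0] using this
  -- Step 3: t < T2 for t ∈ [0, δ)
  have hT2 : m / (2 * (R0sq - m)) * exp (-R0sq / m) = exp (-R0sq / m) / C := by
    rw [hC]
    have : R0sq - m ≠ 0 := by linarith
    field_simp
  have hbound : ∀ t ∈ Ico (0 : ℝ) δ, t < exp (-R0sq / m) / C := by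
    intro t ht
    have h1 := hkey t ht
    have h2 : 0 < exp (-u t / m) := exp_pos _
    rw [lt_div_iff₀ hCpos]
    linarith [mul_comm C t]
  constructor
  · rw [hT2]
    by_contra hcon
    push_neg at hcon
    have hT2pos : 0 < exp (-R0sq / m) / C := by positivity
    exact absurd (hbound _ ⟨le_of_lt hT2pos, hcon⟩) (lt_irrefl _)
  · intro hδeq
    rw [hT2] at hδeq
    set g : ℝ → ℝ := fun t => exp (-R0sq / m) - C * t with hg
    have hgδ : g δ = 0 := by
      rw [hg]
      simp only
      rw [hδeq]
      field_simp
      simp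
    have hgpos : ∀ t < δ, 0 < g t := by
      intro t htlt
      have : C * t < C * δ := by exact mul_lt_mul_of_pos_left htlt hCpos
      have : C * t < exp (-R0sq / m) := by
        have : C * δ = exp (-R0sq / m) := by
          rw [hδeq]; field_simp
        linarith
      simp [hg]; linarith
    have hgt : Tendsto g (𝓝[<] δ) (𝓝[>] 0) := by
      rw [tendsto_nhdsWithin_iff]
      constructor
      · have : Tendsto g (𝓝 δ) (𝓝 (g δ)) := (Continuous.tendsto (by continuity) δ)
        rw [hgδ] at this
        exact this.mono_left nhdsWithin_le_nhds
      · filter_upwards [self_mem_nhdsWithin] with t (ht : t < δ)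
        exact hgpos t ht
    have hlogt : Tendsto (fun t => -m * log (g t)) (𝓝[<] δ) atTop :=
      Tendsto.const_mul_atBot_of_neg (by linarith)
        (Real.tendsto_log_nhdsGT_zero.comp hgt)
    apply tendsto_atTop_mono' _ _ hlogt
    have hIcomem : Ico (0:ℝ) δ ∈ 𝓝[<] δ := by
      rw [mem_nhdsWithin]
      exact ⟨Ioi 0, isOpen_Ioi, hδ, fun x hx => ⟨le_of_lt hx.1, hx.2⟩⟩
    filter_upwards [hIcomem] with t htIco
    have h1 := hkey t htIco
    have h2 : exp (-u t / m) ≤ g t := by simp [hg]; linarith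
    have h3 : -u t / m ≤ log (g t) := by
      rw [← Real.log_exp (-u t / m)]
      exact Real.log_le_log (exp_pos _) h2
    calc -m * log (g t) ≤ -m * (-u t / m) := by
          apply mul_le_mul_of_nonpos_left h3 (by linarith)
      _ = u t := by field_simp
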